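/- Let κ ∈ (0,6], set h = (6−κ)/(2κ) and h̃ = (6−κ)(κ−2)/(8κ), and let r ∈ ℝ. Let Φ : (0,1) → ℝ be twice differentiable, and define Z : 𝒳₂ → ℝ by Z(θ₁,θ₂) = (2·sin((θ₂−θ₁)/2))^(−2h) · Φ(sin²((θ₂−θ₁)/4)). Then Z satisfies the radial BPZ system with constant ℵ = h̃ − r if and only if Φ satisfies Euler's hypergeometric differential equation u(1−u)·Φ''(u) + ((3κ−8)/(2κ))·(1−2u)·Φ'(u) + (8r/κ)·Φ(u) = 0 for all u ∈ (0,1). -/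

import Mathlib

open Real Set

/-- First partial derivative of `Z` in its first variable. -/
noncomputable def pderiv1 (Z : ℝ → ℝ → ℝ) (θ₁ θ₂ : ℝ) : ℝ :=
  deriv (fun s => Z s θ₂) θ₁

/-- First partial derivative of `Z` in its second variable. -/
noncomputable def pderiv2 (Z : ℝ → ℝ → ℝ) (θ₁ θ₂ : ℝ) : ℝ :=
  deriv (fun s => Z θ₁ s) θ₂

/-- Second partial derivative of `Z` in its first variable. -/
noncomputable def pderiv11 (Z : ℝ → ℝ → ℝ) (θ₁ θ₂ : ℝ) : ℝ :=
  deriv (fun s => pderiv1 Z s θ₂) θ₁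

/-- Second partial derivative of `Z` in its second variable. -/
noncomputable def pderiv22 (Z : ℝ → ℝ → ℝ) (θ₁ θ₂ : ℝ) : ℝ :=
  deriv (fun s => pderiv2 Z θ₁ s) θ₂

/-- `Z` satisfies the radial BPZ system with constant `ℵ` on
`𝒳₂ = {(θ₁, θ₂) : θ₁ < θ₂ < θ₁ + 2π}`: for each `j ∈ {1,2}`, with `ℓ` the other index,
`(κ/2)·∂ⱼ²Z + cot((θ_ℓ−θ_j)/2)·∂_ℓZ − ((6−κ)/(4κ))·Z/sin²((θ_ℓ−θ_j)/2) = ℵ·Z`. -/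
def RadialBPZ₂ (κ ℵ : ℝ) (Z : ℝ → ℝ → ℝ) : Prop :=
  ∀ θ₁ θ₂ : ℝ, θ₁ < θ₂ → θ₂ < θ₁ + 2 * π →
    (κ / 2 * pderiv11 Z θ₁ θ₂ + Real.cot ((θ₂ - θ₁) / 2) * pderiv2 Z θ₁ θ₂
        - (6 - κ) / (4 * κ) * Z θ₁ θ₂ / Real.sin ((θ₂ - θ₁) / 2) ^ 2
      = ℵ * Z θ₁ θ₂)
    ∧ (κ / 2 * pderiv22 Z θ₁ θ₂ + Real.cot ((θ₁ - θ₂) / 2) * pderiv1 Z θ₁ θ₂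
        - (6 - κ) / (4 * κ) * Z θ₁ θ₂ / Real.sin ((θ₁ - θ₂) / 2) ^ 2
      = ℵ * Z θ₁ θ₂)

section Stmt0Aux

namespace Stmt0Aux

noncomputable def Gf (h : ℝ) (Φ : ℝ → ℝ) (x : ℝ) : ℝ :=
  (2 * Real.sin (x / 2)) ^ (-(2 * h)) * Φ (Real.sin (x / 4) ^ 2)

noncomputable def Kf (h : ℝ) (Φ : ℝ → ℝ) (x : ℝ) : ℝ :=
  -(2 * h) * Real.cos (x / 2) * Φ (Real.sin (x / 4) ^ 2)
    + Real.sin (x / 2) ^ 2 / 2 * deriv Φ (Real.sin (x / 4) ^ 2)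

noncomputable def Kpf (h : ℝ) (Φ : ℝ → ℝ) (x : ℝ) : ℝ :=
  -(2 * h) * (-(Real.sin (x / 2) / 2)) * Φ (Real.sin (x / 4) ^ 2)
    + (-(2 * h) * Real.cos (x / 2) * (Real.sin (x / 2) / 4)
        + Real.sin (x / 2) * Real.cos (x / 2) / 2) * deriv Φ (Real.sin (x / 4) ^ 2)
    + Real.sin (x / 2) ^ 2 / 2 * (Real.sin (x / 2) / 4)
        * deriv (deriv Φ) (Real.sin (x / 4) ^ 2)

noncomputable def D1f (h : ℝ) (Φ : ℝ → ℝ) (x : ℝ) : ℝ :=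
  (2 * Real.sin (x / 2)) ^ (-(2 * h) - 1) * Kf h Φ x

noncomputable def D2f (h : ℝ) (Φ : ℝ → ℝ) (x : ℝ) : ℝ :=
  (2 * Real.sin (x / 2)) ^ (-(2 * h) - 2) *
    ((-(2 * h) - 1) * Real.cos (x / 2) * Kf h Φ x + 2 * Real.sin (x / 2) * Kpf h Φ x)

lemma sin_half_pos {x : ℝ} (hx : x ∈ Ioo 0 (2 * π)) : 0 < Real.sin (x / 2) :=
  Real.sin_pos_of_pos_of_lt_pi (by linarith [hx.1]) (by linarith [hx.2])

lemma u_mem {x : ℝ} (hx : x ∈ Ioo 0 (2 * π)) : Real.sin (x / 4) ^ 2 ∈ Ioo (0:ℝ) 1 := by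
  have hπ := Real.pi_pos
  have h1 : 0 < Real.sin (x / 4) :=
    Real.sin_pos_of_pos_of_lt_pi (by linarith [hx.1]) (by linarith [hx.2])
  have h2 : 0 < Real.cos (x / 4) :=
    Real.cos_pos_of_mem_Ioo ⟨by linarith [hx.1], by linarith [hx.2]⟩
  constructor
  · positivity
  · nlinarith [Real.sin_sq_add_cos_sq (x / 4)]

lemma hasDerivAt_sin_half (x : ℝ) :
    HasDerivAt (fun y => Real.sin (y / 2)) (Real.cos (x / 2) * (1 / 2)) x :=
  by have := (Real.hasDerivAt_sin (x / 2)).comp x ((hasDerivAt_id x).div_const 2); exact this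

lemma hasDerivAt_cos_half (x : ℝ) :
    HasDerivAt (fun y => Real.cos (y / 2)) (-Real.sin (x / 2) * (1 / 2)) x :=
  by have := (Real.hasDerivAt_cos (x / 2)).comp x ((hasDerivAt_id x).div_const 2); exact this

lemma hasDerivAt_u (x : ℝ) :
    HasDerivAt (fun y => Real.sin (y / 4) ^ 2) (Real.sin (x / 2) / 4) x := by
  have h1 : HasDerivAt (fun y => Real.sin (y / 4)) (Real.cos (x / 4) * (1 / 4)) x :=
    by have := (Real.hasDerivAt_sin (x / 4)).comp x ((hasDerivAt_id x).div_const 4); exact this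
  have h2 := h1.pow 2
  have h3 : (↑(2:ℕ) * Real.sin (x / 4) ^ (2 - 1) * (Real.cos (x / 4) * (1 / 4)))
      = Real.sin (x / 2) / 4 := by
    have h4 : Real.sin (x / 2) = 2 * Real.sin (x / 4) * Real.cos (x / 4) := by
      rw [show x / 2 = 2 * (x / 4) by ring, Real.sin_two_mul]
    rw [h4]; push_cast; ring
  rw [← h3]; exact h2

lemma hasDerivAt_rpow_base {x : ℝ} (hs : 0 < Real.sin (x / 2)) (p : ℝ) :
    HasDerivAt (fun y => (2 * Real.sin (y / 2)) ^ p)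
      (Real.cos (x / 2) * p * (2 * Real.sin (x / 2)) ^ (p - 1)) x := by
  have hb : HasDerivAt (fun y => 2 * Real.sin (y / 2)) (Real.cos (x / 2)) x := by
    have h2 := (hasDerivAt_sin_half x).const_mul (2:ℝ)
    have : (2:ℝ) * (Real.cos (x / 2) * (1 / 2)) = Real.cos (x / 2) := by ring
    rw [← this]; exact h2
  exact hb.rpow_const (Or.inl (by positivity))

lemma hasDerivAt_G {x : ℝ} (hx : x ∈ Ioo 0 (2 * π)) (h : ℝ) {Φ : ℝ → ℝ}
    (hΦ : DifferentiableAt ℝ Φ (Real.sin (x / 4) ^ 2)) :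
    HasDerivAt (Gf h Φ) (D1f h Φ x) x := by
  have hs := sin_half_pos hx
  have h1 := hasDerivAt_rpow_base hs (-(2 * h))
  have h2 : HasDerivAt (fun y => Φ (Real.sin (y / 4) ^ 2))
      (deriv Φ (Real.sin (x / 4) ^ 2) * (Real.sin (x / 2) / 4)) x :=
    hΦ.hasDerivAt.comp x (hasDerivAt_u x)
  have h3 := h1.mul h2
  have hpow : (2 * Real.sin (x / 2)) ^ (-(2 * h)) =
      (2 * Real.sin (x / 2)) ^ (-(2 * h) - 1) * (2 * Real.sin (x / 2)) := by
    rw [← Real.rpow_add_one (by positivity : (0:ℝ) < 2 * Real.sin (x / 2)).ne'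
      (-(2 * h) - 1)]
    ring_nf
  have hval : D1f h Φ x =
      Real.cos (x / 2) * (-(2 * h)) * (2 * Real.sin (x / 2)) ^ (-(2 * h) - 1)
          * Φ (Real.sin (x / 4) ^ 2)
        + (2 * Real.sin (x / 2)) ^ (-(2 * h))
          * (deriv Φ (Real.sin (x / 4) ^ 2) * (Real.sin (x / 2) / 4)) := by
    rw [D1f, Kf, hpow]; ring
  rw [hval]; exact h3

lemma hasDerivAt_K {x : ℝ} (h : ℝ) {Φ : ℝ → ℝ}
    (hΦ1 : DifferentiableAt ℝ Φ (Real.sin (x / 4) ^ 2))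
    (hΦ2 : DifferentiableAt ℝ (deriv Φ) (Real.sin (x / 4) ^ 2)) :
    HasDerivAt (Kf h Φ) (Kpf h Φ x) x := by
  have hphi : HasDerivAt (fun y => Φ (Real.sin (y / 4) ^ 2))
      (deriv Φ (Real.sin (x / 4) ^ 2) * (Real.sin (x / 2) / 4)) x :=
    hΦ1.hasDerivAt.comp x (hasDerivAt_u x)
  have hphi' : HasDerivAt (fun y => deriv Φ (Real.sin (y / 4) ^ 2))
      (deriv (deriv Φ) (Real.sin (x / 4) ^ 2) * (Real.sin (x / 2) / 4)) x :=
    by have := hΦ2.hasDerivAt.comp x (hasDerivAt_u x); exact this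
  have hA := ((hasDerivAt_cos_half x).const_mul (-(2 * h))).mul hphi
  have hB := ((hasDerivAt_sin_half x).pow 2).div_const 2
  have hC := hB.mul hphi'
  have h3 := hA.add hC
  have hval : Kpf h Φ x =
      (-(2 * h) * (-Real.sin (x / 2) * (1 / 2)) * Φ (Real.sin (x / 4) ^ 2)
          + -(2 * h) * Real.cos (x / 2)
            * (deriv Φ (Real.sin (x / 4) ^ 2) * (Real.sin (x / 2) / 4)))
        + (↑(2:ℕ) * Real.sin (x / 2) ^ (2 - 1) * (Real.cos (x / 2) * (1 / 2)) / 2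
            * deriv Φ (Real.sin (x / 4) ^ 2)
          + Real.sin (x / 2) ^ 2 / 2
            * (deriv (deriv Φ) (Real.sin (x / 4) ^ 2) * (Real.sin (x / 2) / 4))) := by
    rw [Kpf]; push_cast; ring
  rw [hval]; exact h3

lemma hasDerivAt_D1 {x : ℝ} (hx : x ∈ Ioo 0 (2 * π)) (h : ℝ) {Φ : ℝ → ℝ}
    (hΦ1 : DifferentiableAt ℝ Φ (Real.sin (x / 4) ^ 2))
    (hΦ2 : DifferentiableAt ℝ (deriv Φ) (Real.sin (x / 4) ^ 2)) :
    HasDerivAt (D1f h Φ) (D2f h Φ x) x := by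
  have hs := sin_half_pos hx
  have h1 := hasDerivAt_rpow_base hs (-(2 * h) - 1)
  have h3 := h1.mul (hasDerivAt_K h hΦ1 hΦ2)
  have hpow : (2 * Real.sin (x / 2)) ^ (-(2 * h) - 1) =
      (2 * Real.sin (x / 2)) ^ (-(2 * h) - 2) * (2 * Real.sin (x / 2)) := by
    rw [← Real.rpow_add_one (by positivity : (0:ℝ) < 2 * Real.sin (x / 2)).ne'
      (-(2 * h) - 2)]
    ring_nf
  have hval : D2f h Φ x =
      Real.cos (x / 2) * (-(2 * h) - 1) * (2 * Real.sin (x / 2)) ^ (-(2 * h) - 1 - 1)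
          * Kf h Φ x
        + (2 * Real.sin (x / 2)) ^ (-(2 * h) - 1) * Kpf h Φ x := by
    rw [show -(2 * h) - 1 - 1 = -(2 * h) - 2 by ring, D2f, hpow]; ring
  rw [hval]; exact h3

end Stmt0Aux

end Stmt0Aux

namespace Stmt0Aux

lemma key_alg (κ h r u C P0 P1 P2 : ℝ) (hκ : κ ≠ 0) (hh : h = (6 - κ) / (2 * κ)) :
    κ / 2 * (C * ((-(2 * h) - 1) * (1 - 2 * u)
          * (-(2 * h) * (1 - 2 * u) * P0 + 4 * u * (1 - u) / 2 * P1)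
        + 2 * (4 * u * (1 - u)) * (h * P0
            + (-(2 * h) * (1 - 2 * u) / 4 + (1 - 2 * u) / 2) * P1
            + 4 * u * (1 - u) / 8 * P2)))
      + 2 * (1 - 2 * u) * C * (-(2 * h) * (1 - 2 * u) * P0 + 4 * u * (1 - u) / 2 * P1)
      - (6 - κ) / (4 * κ) * (4 * C * P0)
      - ((6 - κ) * (κ - 2) / (8 * κ) - r) * (4 * C * (4 * u * (1 - u)) * P0)
    = C * (4 * u * (1 - u)) * (κ / 2) *
        (u * (1 - u) * P2 + (3 * κ - 8) / (2 * κ) * (1 - 2 * u) * P1 + 8 * r / κ * P0) := by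
  subst hh; field_simp; ring

lemma bpz_iff_at {κ h : ℝ} (r : ℝ) (hκ : 0 < κ) (hh : h = (6 - κ) / (2 * κ)) (Φ : ℝ → ℝ)
    {x : ℝ} (hx : x ∈ Ioo 0 (2 * π)) :
    (κ / 2 * D2f h Φ x + Real.cot (x / 2) * D1f h Φ x
        - (6 - κ) / (4 * κ) * Gf h Φ x / Real.sin (x / 2) ^ 2
      = ((6 - κ) * (κ - 2) / (8 * κ) - r) * Gf h Φ x) ↔
    (Real.sin (x / 4) ^ 2 * (1 - Real.sin (x / 4) ^ 2)
        * deriv (deriv Φ) (Real.sin (x / 4) ^ 2)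
      + (3 * κ - 8) / (2 * κ) * (1 - 2 * Real.sin (x / 4) ^ 2)
        * deriv Φ (Real.sin (x / 4) ^ 2)
      + 8 * r / κ * Φ (Real.sin (x / 4) ^ 2) = 0) := by
  have hs : 0 < Real.sin (x / 2) := sin_half_pos hx
  have hum := u_mem hx
  have hc : Real.cos (x / 2) = 1 - 2 * Real.sin (x / 4) ^ 2 := by
    rw [show x / 2 = 2 * (x / 4) by ring, Real.cos_two_mul]
    have := Real.sin_sq_add_cos_sq (x / 4)
    linarith
  have hs2 : Real.sin (x / 2) ^ 2 = 4 * Real.sin (x / 4) ^ 2 * (1 - Real.sin (x / 4) ^ 2) := by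
    have h1 : Real.sin (x / 2) ^ 2 = 1 - Real.cos (x / 2) ^ 2 := Real.sin_sq (x / 2)
    rw [h1, hc]; ring
  have hbne : ((0:ℝ) < 2 * Real.sin (x / 2)) := by positivity
  have hA : (2 * Real.sin (x / 2)) ^ (-(2 * h)) =
      (2 * Real.sin (x / 2)) ^ (-(2 * h) - 2) * (2 * Real.sin (x / 2)) * (2 * Real.sin (x / 2)) := by
    rw [← Real.rpow_add_one hbne.ne' (-(2 * h) - 2)]
    rw [← Real.rpow_add_one hbne.ne' (-(2 * h) - 2 + 1)]
    congr 1; ring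
  have hB : (2 * Real.sin (x / 2)) ^ (-(2 * h) - 1) =
      (2 * Real.sin (x / 2)) ^ (-(2 * h) - 2) * (2 * Real.sin (x / 2)) := by
    rw [← Real.rpow_add_one hbne.ne' (-(2 * h) - 2)]
    congr 1; ring
  have t_d2 : D2f h Φ x =
      (2 * Real.sin (x / 2)) ^ (-(2 * h) - 2) *
        ((-(2 * h) - 1) * (1 - 2 * Real.sin (x / 4) ^ 2)
            * (-(2 * h) * (1 - 2 * Real.sin (x / 4) ^ 2) * Φ (Real.sin (x / 4) ^ 2)
              + Real.sin (x / 2) ^ 2 / 2 * deriv Φ (Real.sin (x / 4) ^ 2))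
          + 2 * Real.sin (x / 2) ^ 2 * (h * Φ (Real.sin (x / 4) ^ 2)
              + (-(2 * h) * (1 - 2 * Real.sin (x / 4) ^ 2) / 4
                  + (1 - 2 * Real.sin (x / 4) ^ 2) / 2) * deriv Φ (Real.sin (x / 4) ^ 2)
              + Real.sin (x / 2) ^ 2 / 8 * deriv (deriv Φ) (Real.sin (x / 4) ^ 2))) := by
    simp only [D2f, Kf, Kpf]; rw [hc]; ring
  have t_cot : Real.cot (x / 2) * D1f h Φ x =
      2 * (1 - 2 * Real.sin (x / 4) ^ 2) * (2 * Real.sin (x / 2)) ^ (-(2 * h) - 2) *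
        (-(2 * h) * (1 - 2 * Real.sin (x / 4) ^ 2) * Φ (Real.sin (x / 4) ^ 2)
          + Real.sin (x / 2) ^ 2 / 2 * deriv Φ (Real.sin (x / 4) ^ 2)) := by
    simp only [D1f, Kf]
    rw [Real.cot_eq_cos_div_sin, hB, hc]
    field_simp
  have t_div : (6 - κ) / (4 * κ) * Gf h Φ x / Real.sin (x / 2) ^ 2 =
      (6 - κ) / (4 * κ) * (4 * (2 * Real.sin (x / 2)) ^ (-(2 * h) - 2)
        * Φ (Real.sin (x / 4) ^ 2)) := by
    simp only [Gf]
    rw [hA]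
    field_simp
    ring
  have t_gf : Gf h Φ x = 4 * (2 * Real.sin (x / 2)) ^ (-(2 * h) - 2)
      * Real.sin (x / 2) ^ 2 * Φ (Real.sin (x / 4) ^ 2) := by
    simp only [Gf]; rw [hA]; ring
  have key : κ / 2 * D2f h Φ x + Real.cot (x / 2) * D1f h Φ x
        - (6 - κ) / (4 * κ) * Gf h Φ x / Real.sin (x / 2) ^ 2
        - ((6 - κ) * (κ - 2) / (8 * κ) - r) * Gf h Φ x
      = (2 * Real.sin (x / 2)) ^ (-(2 * h) - 2)
          * (4 * Real.sin (x / 4) ^ 2 * (1 - Real.sin (x / 4) ^ 2)) * (κ / 2) *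
        (Real.sin (x / 4) ^ 2 * (1 - Real.sin (x / 4) ^ 2)
            * deriv (deriv Φ) (Real.sin (x / 4) ^ 2)
          + (3 * κ - 8) / (2 * κ) * (1 - 2 * Real.sin (x / 4) ^ 2)
            * deriv Φ (Real.sin (x / 4) ^ 2)
          + 8 * r / κ * Φ (Real.sin (x / 4) ^ 2)) := by
    rw [t_d2, t_cot, t_div, t_gf, hs2]
    linear_combination key_alg κ h r (Real.sin (x / 4) ^ 2)
      ((2 * Real.sin (x / 2)) ^ (-(2 * h) - 2)) (Φ (Real.sin (x / 4) ^ 2))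
      (deriv Φ (Real.sin (x / 4) ^ 2)) (deriv (deriv Φ) (Real.sin (x / 4) ^ 2)) hκ.ne' hh
  have hCpos : 0 < (2 * Real.sin (x / 2)) ^ (-(2 * h) - 2) := Real.rpow_pos_of_pos hbne _
  have hwpos : 0 < 4 * Real.sin (x / 4) ^ 2 * (1 - Real.sin (x / 4) ^ 2) := by
    have := hum.1; have := hum.2; nlinarith
  have hfac : (2 * Real.sin (x / 2)) ^ (-(2 * h) - 2)
      * (4 * Real.sin (x / 4) ^ 2 * (1 - Real.sin (x / 4) ^ 2)) * (κ / 2) ≠ 0 := by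
    positivity
  constructor
  · intro heq
    have h0 : (2 * Real.sin (x / 2)) ^ (-(2 * h) - 2)
        * (4 * Real.sin (x / 4) ^ 2 * (1 - Real.sin (x / 4) ^ 2)) * (κ / 2) *
        (Real.sin (x / 4) ^ 2 * (1 - Real.sin (x / 4) ^ 2)
            * deriv (deriv Φ) (Real.sin (x / 4) ^ 2)
          + (3 * κ - 8) / (2 * κ) * (1 - 2 * Real.sin (x / 4) ^ 2)
            * deriv Φ (Real.sin (x / 4) ^ 2)
          + 8 * r / κ * Φ (Real.sin (x / 4) ^ 2)) = 0 := by
      rw [← key]; rw [heq]; ring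
    exact (mul_eq_zero.mp h0).resolve_left hfac
  · intro hE
    have := key
    rw [hE, mul_zero] at this
    linarith

end Stmt0Aux

namespace Stmt0Aux

lemma pderiv_eqs {h : ℝ} {Φ : ℝ → ℝ}
    (hΦ : ∀ u ∈ Ioo (0:ℝ) 1, DifferentiableAt ℝ Φ u ∧ DifferentiableAt ℝ (deriv Φ) u)
    {Z : ℝ → ℝ → ℝ} (hZ : ∀ a b : ℝ, Z a b = Gf h Φ (b - a))
    {θ₁ θ₂ : ℝ} (h1 : θ₁ < θ₂) (h2 : θ₂ < θ₁ + 2 * π) :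
    pderiv1 Z θ₁ θ₂ = -D1f h Φ (θ₂ - θ₁) ∧
    pderiv2 Z θ₁ θ₂ = D1f h Φ (θ₂ - θ₁) ∧
    pderiv11 Z θ₁ θ₂ = D2f h Φ (θ₂ - θ₁) ∧
    pderiv22 Z θ₁ θ₂ = D2f h Φ (θ₂ - θ₁) := by
  have hmem : ∀ {a b : ℝ}, a < b → b < a + 2 * π → b - a ∈ Ioo 0 (2 * π) :=
    fun ha hb => ⟨by linarith, by linarith⟩
  have H2 : ∀ a b : ℝ, a < b → b < a + 2 * π → pderiv2 Z a b = D1f h Φ (b - a) := by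
    intro a b ha hb
    have hm := hmem ha hb
    have hd := (hasDerivAt_G hm h (hΦ _ (u_mem hm)).1).comp b ((hasDerivAt_id b).sub_const a)
    have hfun : (fun t => Z a t) = fun t => Gf h Φ (t - a) := funext fun t => hZ a t
    rw [pderiv2, hfun]
    simpa [Function.comp_def] using hd.deriv
  have H1 : ∀ a b : ℝ, a < b → b < a + 2 * π → pderiv1 Z a b = -D1f h Φ (b - a) := by
    intro a b ha hb
    have hm := hmem ha hb
    have hd := (hasDerivAt_G hm h (hΦ _ (u_mem hm)).1).comp a ((hasDerivAt_id a).const_sub b)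
    have hfun : (fun s => Z s b) = fun s => Gf h Φ (b - s) := funext fun s => hZ s b
    rw [pderiv1, hfun]
    simpa [Function.comp_def] using hd.deriv
  have hm := hmem h1 h2
  have hΦ1 := (hΦ _ (u_mem hm)).1
  have hΦ2 := (hΦ _ (u_mem hm)).2
  refine ⟨H1 θ₁ θ₂ h1 h2, H2 θ₁ θ₂ h1 h2, ?_, ?_⟩
  · have hop : IsOpen {s : ℝ | θ₂ - 2 * π < s ∧ s < θ₂} :=
      (isOpen_lt continuous_const continuous_id).inter (isOpen_lt continuous_id continuous_const)
    have hev : (fun s => pderiv1 Z s θ₂) =ᶠ[nhds θ₁] fun s => -D1f h Φ (θ₂ - s) := by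
      filter_upwards [hop.mem_nhds ⟨by linarith, h1⟩] with s hs
      exact H1 s θ₂ hs.2 (by have := hs.1; linarith)
    rw [pderiv11, hev.deriv_eq]
    have hd := ((hasDerivAt_D1 hm h hΦ1 hΦ2).comp θ₁ ((hasDerivAt_id θ₁).const_sub θ₂)).neg
    simpa [Function.comp_def] using hd.deriv
  · have hop : IsOpen {t : ℝ | θ₁ < t ∧ t < θ₁ + 2 * π} :=
      (isOpen_lt continuous_const continuous_id).inter (isOpen_lt continuous_id continuous_const)
    have hev : (fun t => pderiv2 Z θ₁ t) =ᶠ[nhds θ₂] fun t => D1f h Φ (t - θ₁) := by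
      filter_upwards [hop.mem_nhds ⟨h1, h2⟩] with t ht
      exact H2 θ₁ t ht.1 ht.2
    rw [pderiv22, hev.deriv_eq]
    have hd := (hasDerivAt_D1 hm h hΦ1 hΦ2).comp θ₂ ((hasDerivAt_id θ₂).sub_const θ₁)
    simpa [Function.comp_def] using hd.deriv

end Stmt0Aux


/-- with `h = (6−κ)/(2κ)`, `h̃ = (6−κ)(κ−2)/(8κ)`, `r ∈ ℝ`, and `Φ` twice
differentiable on `(0,1)`, the function
`Z(θ₁,θ₂) = (2 sin((θ₂−θ₁)/2))^(−2h) · Φ(sin²((θ₂−θ₁)/4))` satisfies the radial BPZ system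
with constant `ℵ = h̃ − r` iff `Φ` satisfies Euler's hypergeometric differential equation
`u(1−u)Φ'' + ((3κ−8)/(2κ))(1−2u)Φ' + (8r/κ)Φ = 0` on `(0,1)`. -/
theorem stmt0 (κ : ℝ) (hκ0 : 0 < κ) (hκ6 : κ ≤ 6) (r : ℝ)
    (h h' : ℝ) (hh : h = (6 - κ) / (2 * κ)) (hh' : h' = (6 - κ) * (κ - 2) / (8 * κ))
    (Φ : ℝ → ℝ)
    (hΦ : ∀ u ∈ Ioo (0:ℝ) 1, DifferentiableAt ℝ Φ u ∧ DifferentiableAt ℝ (deriv Φ) u)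
    (Z : ℝ → ℝ → ℝ)
    (hZ : ∀ θ₁ θ₂ : ℝ, Z θ₁ θ₂
      = (2 * Real.sin ((θ₂ - θ₁) / 2)) ^ (-(2 * h)) * Φ (Real.sin ((θ₂ - θ₁) / 4) ^ 2)) :
    RadialBPZ₂ κ (h' - r) Z ↔
      ∀ u ∈ Ioo (0:ℝ) 1,
        u * (1 - u) * deriv (deriv Φ) u
          + (3 * κ - 8) / (2 * κ) * (1 - 2 * u) * deriv Φ u
          + 8 * r / κ * Φ u = 0 := by
  have hZG : ∀ a b : ℝ, Z a b = Stmt0Aux.Gf h Φ (b - a) := fun a b => by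
    rw [hZ a b]; rfl
  constructor
  · intro hB u₀ hu₀
    obtain ⟨hu₀1, hu₀2⟩ := hu₀
    have hπ := Real.pi_pos
    set a := Real.arcsin (Real.sqrt u₀) with ha_def
    have ha1 : 0 < a := Real.arcsin_pos.mpr (Real.sqrt_pos.mpr hu₀1)
    have hsq1 : Real.sqrt u₀ < 1 := by
      nlinarith [Real.sq_sqrt hu₀1.le, Real.sqrt_nonneg u₀]
    have ha2 : a < π / 2 := Real.arcsin_lt_pi_div_two.mpr hsq1
    have hx : (4 * a) ∈ Ioo 0 (2 * π) := ⟨by linarith, by linarith⟩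
    have hux : Real.sin (4 * a / 4) ^ 2 = u₀ := by
      rw [show 4 * a / 4 = a by ring, ha_def,
        Real.sin_arcsin (by linarith [Real.sqrt_nonneg u₀]) hsq1.le, Real.sq_sqrt hu₀1.le]
    obtain ⟨e1, _⟩ := hB 0 (4 * a) hx.1 (by linarith [hx.2])
    obtain ⟨_, p2, p11, _⟩ := Stmt0Aux.pderiv_eqs hΦ hZG hx.1 (by linarith [hx.2] : (4*a) < 0 + 2*π)
    rw [p11, p2, hZG 0 (4 * a), sub_zero, hh'] at e1
    have hE := (Stmt0Aux.bpz_iff_at r hκ0 hh Φ hx).mp e1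
    rw [hux] at hE
    exact hE
  · intro hODE θ₁ θ₂ h1 h2
    have hx : θ₂ - θ₁ ∈ Ioo 0 (2 * π) := ⟨by linarith, by linarith⟩
    obtain ⟨p1, p2, p11, p22⟩ := Stmt0Aux.pderiv_eqs hΦ hZG h1 h2
    have hE := hODE _ (Stmt0Aux.u_mem hx)
    have main := (Stmt0Aux.bpz_iff_at r hκ0 hh Φ hx).mpr hE
    constructor
    · rw [p11, p2, hZG θ₁ θ₂, hh']
      exact main
    · rw [p22, p1, hZG θ₁ θ₂, hh']
      have hcot : Real.cot ((θ₁ - θ₂) / 2) = -Real.cot ((θ₂ - θ₁) / 2) := by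
        rw [Real.cot_eq_cos_div_sin, Real.cot_eq_cos_div_sin,
          show (θ₁ - θ₂) / 2 = -((θ₂ - θ₁) / 2) by ring, Real.cos_neg, Real.sin_neg, div_neg]
      have hsin : Real.sin ((θ₁ - θ₂) / 2) ^ 2 = Real.sin ((θ₂ - θ₁) / 2) ^ 2 := by
        rw [show (θ₁ - θ₂) / 2 = -((θ₂ - θ₁) / 2) by ring, Real.sin_neg]; ring
      rw [hcot, hsin, show -Real.cot ((θ₂ - θ₁) / 2) * -Stmt0Aux.D1f h Φ (θ₂ - θ₁)
        = Real.cot ((θ₂ - θ₁) / 2) * Stmt0Aux.D1f h Φ (θ₂ - θ₁) by ring]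
      exact main
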